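/- Suppose W ∈ ℝ^{r×d} and h ∈ ℝ^r are such that {p ∈ ℝ^d : W p ≤ h} = {vec(C)} is a singleton, for a payoff matrix C (the support single point); let m = vec(C), let s ≥ 0, and let the risk levels ε_i ∈ (0,1] be arbitrary. Then x ∈ S is a distributionally robust optimization equilibrium for the ambiguity set 𝓕(W,h,m,s) if and only if x is a Nash equilibrium of the complete-information game with payoff matrix C. -/

import Mathlib

open MeasureTheory Matrix

namespace DRG

/-- A payoff matrix: assigns to each player `i` and each joint action a real payoff. -/
abbrev Payoff (N : ℕ) (a : Fin N → ℕ) : Type := Fin N → (∀ k : Fin N, Fin (a k)) → ℝ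

/-- A (not necessarily feasible) strategy profile. -/
abbrev Strategy (N : ℕ) (a : Fin N → ℕ) : Type := ∀ k : Fin N, Fin (a k) → ℝ

/-- Index type for the vectorization of a payoff matrix. -/
abbrev Idx (N : ℕ) (a : Fin N → ℕ) : Type := Fin N × (∀ k : Fin N, Fin (a k))

/-- Vectorization of a payoff matrix. -/
def vecP {N : ℕ} {a : Fin N → ℕ} (P : Payoff N a) : Idx N a → ℝ := fun q => P q.1 q.2

/-- The mixed-strategy simplex `S_n`. -/
def simplex (n : ℕ) : Set (Fin n → ℝ) := {x | (∀ j, 0 ≤ x j) ∧ ∑ j, x j = 1}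

/-- The set `S` of mixed strategy profiles. -/
def profiles (N : ℕ) (a : Fin N → ℕ) : Set (Strategy N a) :=
  {x | ∀ i, x i ∈ simplex (a i)}

/-- Expected payoff `π_i(P;x)`. -/
noncomputable def pay {N : ℕ} {a : Fin N → ℕ} (P : Payoff N a) (i : Fin N)
    (x : Strategy N a) : ℝ :=
  ∑ j : (∀ k : Fin N, Fin (a k)), P i j * ∏ k, x k (j k)

/-- Nash equilibrium of the complete information game with payoff matrix `P`. -/
def IsNashEq {N : ℕ} {a : Fin N → ℕ} (P : Payoff N a) (x : Strategy N a) : Prop :=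
  x ∈ profiles N a ∧ ∀ i : Fin N, ∀ u ∈ simplex (a i),
    pay P i (Function.update x i u) ≤ pay P i x

/-- Robust optimization equilibrium for uncertainty set `U`. -/
def IsRobustEq {N : ℕ} {a : Fin N → ℕ} (U : Set (Payoff N a)) (x : Strategy N a) : Prop :=
  x ∈ profiles N a ∧ ∀ i : Fin N, ∀ u ∈ simplex (a i),
    (⨅ P : U, pay (P : Payoff N a) i (Function.update x i u)) ≤
      ⨅ P : U, pay (P : Payoff N a) i x

/-- Conditional value at risk of the loss `L` at level `ε` under `Q`. -/
noncomputable def cvar {V : Type*} [MeasurableSpace V] (Q : Measure V) (ε : ℝ)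
    (L : V → ℝ) : ℝ :=
  ⨅ ζ : ℝ, (ζ + (1 / ε) * ∫ p, max (L p - ζ) 0 ∂Q)

/-- Distributionally robust optimization equilibrium for ambiguity set `𝓕` and
risk levels `ε`. -/
def IsDREq {N : ℕ} {a : Fin N → ℕ} (𝓕 : Set (Measure (Payoff N a))) (ε : Fin N → ℝ)
    (x : Strategy N a) : Prop :=
  x ∈ profiles N a ∧ ∀ i : Fin N, ∀ u ∈ simplex (a i),
    (⨆ Q : 𝓕, cvar (Q : Measure (Payoff N a)) (ε i) (fun P => - pay P i x)) ≤
      ⨆ Q : 𝓕, cvar (Q : Measure (Payoff N a)) (ε i)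
        (fun P => - pay P i (Function.update x i u))

/-- The ambiguity set `𝓕(W,h,m,s)`. -/
def ambiguity {N : ℕ} {a : Fin N → ℕ} (r : ℕ) (W : Matrix (Fin r) (Idx N a) ℝ)
    (h : Fin r → ℝ) (m : Idx N a → ℝ) (s : ℝ) : Set (Measure (Payoff N a)) :=
  {Q | IsProbabilityMeasure Q ∧ Integrable (fun p => p) Q ∧
    Q {P | ∀ t, (W *ᵥ vecP P) t ≤ h t} = 1 ∧
    vecP (∫ p, p ∂Q) = m ∧
    (∫ p, ∑ q, |vecP p q - m q| ∂Q) ≤ s}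

/-- The matrix `Y^i(x^{-i})` satisfying `vec(P)ᵀ Y^i(x^{-i}) uⁱ = π_i(P;(x^{-i},uⁱ))`. -/
noncomputable def Ymat {N : ℕ} {a : Fin N → ℕ} (i : Fin N) (x : Strategy N a) :
    Matrix (Idx N a) (Fin (a i)) ℝ :=
  Matrix.of fun q l =>
    if q.1 = i ∧ q.2 i = l then ∏ r ∈ Finset.univ.erase i, x r (q.2 r) else 0


lemma eq_dirac_of {α} [MeasurableSpace α] [MeasurableSingletonClass α] (Q : Measure α)
    [IsProbabilityMeasure Q] (c : α) (h : Q {c} = 1) : Q = Measure.dirac c := by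
  ext B hB
  rw [Measure.dirac_apply' _ hB]
  by_cases hc : c ∈ B
  · rw [Set.indicator_of_mem hc]
    refine le_antisymm prob_le_one ?_
    calc (1:ENNReal) = Q {c} := h.symm
      _ ≤ Q B := measure_mono (Set.singleton_subset_iff.2 hc)
  · rw [Set.indicator_of_notMem hc]
    have h2 : Q {c}ᶜ = 0 := by
      rw [measure_compl (measurableSet_singleton c) (measure_ne_top Q _), h, measure_univ,
        tsub_self]
    exact le_antisymm (le_trans (measure_mono (Set.subset_compl_singleton_iff.2 hc)) h2.le)
      (zero_le)

lemma integrable_id_dirac {α} [MeasurableSpace α] [MeasurableSingletonClass α]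
    [NormedAddCommGroup α] (c : α) : Integrable (fun p : α => p) (Measure.dirac c) := by
  have h : (fun p : α => p) =ᵐ[Measure.dirac c] (fun _ => c) := by
    rw [Filter.EventuallyEq, ae_dirac_eq]; exact Filter.eventually_pure.2 rfl
  exact (integrable_const c).congr h.symm

lemma cvar_dirac {V : Type*} [MeasurableSpace V] [MeasurableSingletonClass V] (c : V)
    {ε : ℝ} (hε : ε ∈ Set.Ioc (0:ℝ) 1) (L : V → ℝ) : cvar (Measure.dirac c) ε L = L c := by
  have hε1 : (1:ℝ) ≤ 1 / ε := by
    rw [le_div_iff₀ hε.1]; simpa using hε.2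
  have heval : ∀ ζ : ℝ, (ζ + (1 / ε) * ∫ p, max (L p - ζ) 0 ∂(Measure.dirac c))
      = ζ + (1 / ε) * max (L c - ζ) 0 := fun ζ => by rw [integral_dirac]
  have hlb : ∀ ζ : ℝ, L c ≤ ζ + (1 / ε) * max (L c - ζ) 0 := by
    intro ζ
    rcases le_total (L c) ζ with h1 | h1
    · have : (0:ℝ) ≤ (1 / ε) * max (L c - ζ) 0 :=
        mul_nonneg (by positivity) (le_max_right _ _)
      linarith
    · rw [max_eq_left (by linarith)]
      nlinarith [mul_le_mul_of_nonneg_right hε1 (show (0:ℝ) ≤ L c - ζ by linarith)]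
  refine le_antisymm ?_ (le_ciInf fun ζ => (hlb ζ).trans_eq (heval ζ).symm)
  have hb : BddBelow (Set.range fun ζ : ℝ =>
      ζ + (1 / ε) * ∫ p, max (L p - ζ) 0 ∂(Measure.dirac c)) :=
    ⟨L c, by rintro _ ⟨ζ, rfl⟩; exact (hlb ζ).trans_eq (heval ζ).symm⟩
  calc cvar (Measure.dirac c) ε L ≤
      L c + (1 / ε) * ∫ p, max (L p - L c) 0 ∂(Measure.dirac c) := ciInf_le hb (L c)
    _ = L c := by rw [integral_dirac]; simp

/-- **Special case: support single point.**
Suppose `W` and `h` are such that `{p : W p ≤ h} = {vec(C)}` is a singleton,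
for a payoff matrix `C` (the support single point); let `m = vec(C)`, `s ≥ 0`,
and let the risk levels `ε_i ∈ (0,1]` be arbitrary.  Then `x ∈ S` is a
distributionally robust optimization equilibrium for the ambiguity set
`𝓕(W,h,m,s)` iff `x` is a Nash equilibrium of the complete-information game
with payoff matrix `C`. -/
theorem drEq_iff_nashEq_of_singleSupport {N r : ℕ} (hN : 1 ≤ N)
    (a : Fin N → ℕ) (ha : ∀ i, 1 ≤ a i)
    (W : Matrix (Fin r) (Idx N a) ℝ) (h : Fin r → ℝ) (C : Payoff N a)
    (hsingle : {p : Idx N a → ℝ | ∀ t, (W *ᵥ p) t ≤ h t} = {vecP C})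
    (s : ℝ) (hs : 0 ≤ s)
    (ε : Fin N → ℝ) (hε : ∀ i, ε i ∈ Set.Ioc (0 : ℝ) 1) (x : Strategy N a) :
    IsDREq (ambiguity r W h (vecP C) s) ε x ↔ IsNashEq C x := by
  classical
  have hiff : ∀ p : Idx N a → ℝ, (∀ t, (W *ᵥ p) t ≤ h t) ↔ p = vecP C := by
    intro p
    rw [← Set.mem_singleton_iff, ← hsingle]
    rfl
  have hvec : Function.Injective (vecP (N := N) (a := a)) := by
    intro P Q hPQ
    funext i j
    exact congrFun hPQ (i, j)
  have hsetC : {P : Payoff N a | ∀ t, (W *ᵥ vecP P) t ≤ h t} = {C} := by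
    ext P
    simp only [Set.mem_setOf_eq, Set.mem_singleton_iff, hiff]
    exact ⟨fun hp => hvec hp, fun hp => by rw [hp]⟩
  have hamb : ambiguity r W h (vecP C) s = {Measure.dirac C} := by
    ext Q
    constructor
    · rintro ⟨hprob, hint, hone, hmean, hs1⟩
      rw [hsetC] at hone
      exact eq_dirac_of Q C hone
    · rintro rfl
      refine ⟨inferInstance, integrable_id_dirac C, ?_, ?_, ?_⟩
      · rw [hsetC]
        exact Measure.dirac_apply_of_mem rfl
      · rw [integral_dirac]
      · rw [integral_dirac]
        simpa using hs
  have key : ∀ (i : Fin N) (y : Strategy N a),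
      (⨆ Q : (ambiguity r W h (vecP C) s), cvar (Q : Measure (Payoff N a)) (ε i)
        (fun P => - pay P i y)) = - pay C i y := by
    intro i y
    rw [hamb]
    rw [ciSup_unique]
    show cvar (Measure.dirac C) (ε i) (fun P => - pay P i y) = - pay C i y
    exact cvar_dirac C (hε i) _
  constructor
  · rintro ⟨hx, hc⟩
    refine ⟨hx, fun i u hu => ?_⟩
    have h2 := hc i u hu
    rw [key i x, key i (Function.update x i u)] at h2
    linarith
  · rintro ⟨hx, hc⟩
    refine ⟨hx, fun i u hu => ?_⟩
    have h2 := hc i u hu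
    rw [key i x, key i (Function.update x i u)]
    linarith


end DRG
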